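/- For a prime p, (x1^p * x2 - x1 * x2^p)^(p-1) = sum over i from 0 to p-1 of x1^((p-1)(p-i)) * x2^((p-1)(i+1)) in the polynomial ring F_p[x1, x2]. -/

import Mathlib

open MvPolynomial in
theorem Q0_expansion (p : ℕ) [Fact p.Prime] :
    ((X 0 ^ p * X 1 - X 0 * X 1 ^ p : MvPolynomial (Fin 2) (ZMod p)) ^ (p - 1)) =
      ∑ i ∈ Finset.range p, X 0 ^ ((p - 1) * (p - i)) * X 1 ^ ((p - 1) * (i + 1)) := by
  have hp := (Fact.out : p.Prime)
  have hp1 : 1 ≤ p := hp.one_lt.le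
  set u : MvPolynomial (Fin 2) (ZMod p) := X 0 ^ p * X 1 with hu
  set v : MvPolynomial (Fin 2) (ZMod p) := X 0 * X 1 ^ p with hv
  have hne : u - v ≠ 0 := by
    rw [sub_ne_zero]
    intro h
    have := congrArg (MvPolynomial.coeff (Finsupp.single 0 p + Finsupp.single 1 1)) h
    simp only [hu, hv, X, monomial_pow, monomial_mul, one_pow, one_mul, mul_one,
      coeff_monomial] at this
    rw [Finsupp.smul_single, Finsupp.smul_single, smul_eq_mul, mul_one, if_pos rfl] at this
    split_ifs at this with hc
    · have h0 := DFunLike.congr_fun hc 0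
      simp at h0
      have := hp.one_lt
      omega
    · exact one_ne_zero this
  have hgeom : (∑ i ∈ Finset.range p, u ^ i * v ^ (p - 1 - i)) * (u - v) = u ^ p - v ^ p :=
    geom_sum₂_mul u v p
  have hfrob : (u - v) ^ p = u ^ p - v ^ p := sub_pow_char u v
  have hcancel : (u - v) ^ (p - 1) = ∑ i ∈ Finset.range p, u ^ i * v ^ (p - 1 - i) := by
    have h1 : (u - v) ^ (p - 1) * (u - v) = (∑ i ∈ Finset.range p, u ^ i * v ^ (p - 1 - i)) * (u - v) := by
      rw [hgeom, ← hfrob, ← pow_succ]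
      congr 1
      omega
    exact mul_right_cancel₀ hne h1
  rw [hcancel, ← Finset.sum_range_reflect]
  apply Finset.sum_congr rfl
  intro i hi
  simp only [Finset.mem_range] at hi
  obtain ⟨a, ha⟩ : ∃ a, p = a + 1 + i := ⟨p - 1 - i, by omega⟩
  have h2 : p - 1 - (p - 1 - i) = i := by omega
  have h1 : (p - 1) * (p - i) = p * (p - 1 - i) + i := by
    have e1 : p - 1 = a + i := by omega
    have e2 : p - i = a + 1 := by omega
    have e3 : p - 1 - i = a := by omega
    rw [e3, e1, e2, ha]; ring
  have h3 : (p - 1) * (i + 1) = (p - 1 - i) + p * i := by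
    have e1 : p - 1 = a + i := by omega
    have e3 : p - 1 - i = a := by omega
    rw [e3, e1, ha]; ring
  rw [h2, h1, h3, hu, hv, mul_pow, mul_pow, pow_add, pow_add, ← pow_mul, ← pow_mul]
  ring
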